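/- arXiv:1904.13185 — 2 statements merged into one kernel-verified Lean document; each statement's English description precedes it below -/
import Mathlib

section
/- Let N ∈ ℕ, Q_1,…,Q_N, E_1,…,E_{N−1} > 0, S the path encoding, M its past maximum, b_n the local minima locations of S, a_n the local maxima locations, and c_n = min{b_n + M(b_n) − S(b_n), a_{n+1}} (with a_{N+1} = ∞). Then for each 1 ≤ n ≤ N−1: M(b_{n+1}) − M(b_n) = a_{n+1} − c_n. -/
open MeasureTheory Set

noncomputable def aPt (Q E : ℕ → ℝ) (n : ℕ) : ℝ :=
  ∑ k ∈ Finset.Icc 1 (n - 1), (Q k + E k)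

noncomputable def bPt (Q E : ℕ → ℝ) (n : ℕ) : ℝ := aPt Q E n + Q n

def ballSet (N : ℕ) (Q E : ℕ → ℝ) : Set ℝ :=
  ⋃ n ∈ Finset.Icc 1 N, Set.Icc (aPt Q E n) (bPt Q E n)

noncomputable def pathEnc (N : ℕ) (Q E : ℕ → ℝ) (x : ℝ) : ℝ :=
  ∫ y in (0:ℝ)..x, (1 - 2 * Set.indicator (ballSet N Q E) (fun _ => (1:ℝ)) y)

noncomputable def pastMax (S : ℝ → ℝ) (x : ℝ) : ℝ := sSup (S '' Set.Iic x)

section Aux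

variable (N : ℕ) (Q E : ℕ → ℝ)

lemma ballSet_measurable : MeasurableSet (ballSet N Q E) :=
  MeasurableSet.biUnion (Finset.Icc 1 N).countable_toSet fun _ _ => measurableSet_Icc

/-- The integrand. -/
noncomputable def slopeF : ℝ → ℝ :=
  fun y => 1 - 2 * Set.indicator (ballSet N Q E) (fun _ => (1:ℝ)) y

lemma slopeF_intInt (x y : ℝ) : IntervalIntegrable (slopeF N Q E) volume x y := by
  have h1 : IntervalIntegrable ((ballSet N Q E).indicator (fun _ => (1:ℝ))) volume x y := by
    rw [intervalIntegrable_iff]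
    refine ((integrableOn_const_iff (C := (1:ℝ))).mpr (Or.inr ?_)).indicator (ballSet_measurable N Q E)
    exact measure_Ioc_lt_top
  exact (intervalIntegrable_const (c := (1:ℝ))).sub (h1.const_mul 2)

lemma pathEnc_sub (x y : ℝ) :
    pathEnc N Q E y - pathEnc N Q E x = ∫ t in x..y, slopeF N Q E t := by
  show (∫ t in (0:ℝ)..y, slopeF N Q E t) - (∫ t in (0:ℝ)..x, slopeF N Q E t) = _
  rw [intervalIntegral.integral_interval_sub_left (slopeF_intInt N Q E 0 y)
    (slopeF_intInt N Q E 0 x)]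

lemma slopeF_le_one (t : ℝ) : slopeF N Q E t ≤ 1 := by
  have := Set.indicator_nonneg (s := ballSet N Q E)
    (f := fun _ => (1:ℝ)) (fun _ _ => zero_le_one) t
  simp only [slopeF]; nlinarith

lemma rise (x y : ℝ) (hxy : x ≤ y) (h : ∀ t ∈ Ioo x y, t ∉ ballSet N Q E) :
    pathEnc N Q E y = pathEnc N Q E x + (y - x) := by
  have h0 : ∀ᵐ (t : ℝ), t ∉ ({y} : Set ℝ) := by
    rw [ae_iff]
    simp
  have hcong : ∫ t in x..y, slopeF N Q E t = ∫ t in x..y, (1:ℝ) := by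
    apply intervalIntegral.integral_congr_ae
    filter_upwards [h0] with t ht hmem
    rw [Set.uIoc_of_le hxy] at hmem
    have htB : t ∉ ballSet N Q E := h t ⟨hmem.1, lt_of_le_of_ne hmem.2 (by simpa using ht)⟩
    simp [slopeF, Set.indicator_of_notMem htB]
  have := pathEnc_sub N Q E x y
  rw [hcong] at this
  simp at this
  linarith

lemma fall (x y : ℝ) (hxy : x ≤ y) (h : Icc x y ⊆ ballSet N Q E) :
    pathEnc N Q E y = pathEnc N Q E x - (y - x) := by
  have hcong : ∫ t in x..y, slopeF N Q E t = ∫ t in x..y, (-1:ℝ) := by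
    apply intervalIntegral.integral_congr
    intro t ht
    rw [Set.uIcc_of_le hxy] at ht
    simp only [slopeF, Set.indicator_of_mem (h ht)]
    norm_num
  have := pathEnc_sub N Q E x y
  rw [hcong] at this
  simp at this
  linarith

end Aux

section Main

variable {N : ℕ} {Q E : ℕ → ℝ}

lemma aPt_succ (n : ℕ) (hn : 1 ≤ n) : aPt Q E (n + 1) = bPt Q E n + E n := by
  obtain ⟨m, rfl⟩ : ∃ m, n = m + 1 := ⟨n - 1, by omega⟩
  unfold aPt bPt aPt
  rw [show (m + 1 + 1 - 1) = (m + 1) from rfl,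
    Finset.sum_Icc_succ_top (by omega : 1 ≤ m + 1)]
  simp
  ring

lemma aPt_nonneg_terms (hN : 1 ≤ N)
    (hQ : ∀ n, 1 ≤ n → n ≤ N → 0 < Q n)
    (hE : ∀ n, 1 ≤ n → n ≤ N - 1 → 0 < E n)
    {n : ℕ} (hn : n ≤ N) : ∀ k ∈ Finset.Icc 1 (n - 1), 0 ≤ Q k + E k := by
  intro k hk
  rw [Finset.mem_Icc] at hk
  have hk1 : 1 ≤ k := hk.1
  have hk2 : k ≤ N - 1 := by omega
  have := hQ k hk1 (by omega)
  have := hE k hk1 hk2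
  linarith

lemma aPt_mono (hN : 1 ≤ N)
    (hQ : ∀ n, 1 ≤ n → n ≤ N → 0 < Q n)
    (hE : ∀ n, 1 ≤ n → n ≤ N - 1 → 0 < E n)
    {m n : ℕ} (hmn : m ≤ n) (hn : n ≤ N) : aPt Q E m ≤ aPt Q E n := by
  unfold aPt
  apply Finset.sum_le_sum_of_subset_of_nonneg
  · exact Finset.Icc_subset_Icc_right (by omega)
  · intro k hk _
    exact aPt_nonneg_terms hN hQ hE hn k hk

lemma aPt_nonneg (hN : 1 ≤ N)
    (hQ : ∀ n, 1 ≤ n → n ≤ N → 0 < Q n)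
    (hE : ∀ n, 1 ≤ n → n ≤ N - 1 → 0 < E n)
    {n : ℕ} (hn : n ≤ N) : 0 ≤ aPt Q E n := by
  have : aPt Q E 0 = 0 := by unfold aPt; simp
  calc (0:ℝ) = aPt Q E 0 := this.symm
  _ ≤ aPt Q E n := aPt_mono hN hQ hE (Nat.zero_le n) hn

lemma bPt_le_bPt (hN : 1 ≤ N)
    (hQ : ∀ n, 1 ≤ n → n ≤ N → 0 < Q n)
    (hE : ∀ n, 1 ≤ n → n ≤ N - 1 → 0 < E n)
    {m n : ℕ} (hm : 1 ≤ m) (hmn : m ≤ n) (hn : n ≤ N) : bPt Q E m ≤ bPt Q E n := by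
  rcases eq_or_lt_of_le hmn with rfl | hlt
  · exact le_rfl
  · have h1 : bPt Q E m + E m = aPt Q E (m + 1) := (aPt_succ m hm).symm
    have hEm : 0 < E m := hE m hm (by omega)
    have h2 : aPt Q E (m + 1) ≤ aPt Q E n := aPt_mono hN hQ hE (by omega) hn
    have h3 : 0 < Q n := hQ n (by omega) hn
    unfold bPt at *
    linarith

/-- No ball intersects the open interval `(bPt n, aPt (n+1))`. -/
lemma gap_empty (hN : 1 ≤ N)
    (hQ : ∀ n, 1 ≤ n → n ≤ N → 0 < Q n)
    (hE : ∀ n, 1 ≤ n → n ≤ N - 1 → 0 < E n)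
    {n : ℕ} (hn1 : 1 ≤ n) (hn2 : n + 1 ≤ N) :
    ∀ t ∈ Ioo (bPt Q E n) (aPt Q E (n + 1)), t ∉ ballSet N Q E := by
  intro t ht htB
  simp only [ballSet, Set.mem_iUnion, Finset.mem_Icc] at htB
  obtain ⟨m, ⟨hm1, hm2⟩, htm⟩ := htB
  rcases le_or_gt m n with hmn | hmn
  · have : bPt Q E m ≤ bPt Q E n := bPt_le_bPt hN hQ hE hm1 hmn (by omega)
    exact absurd (htm.2.trans this) (not_le.mpr ht.1)
  · have : aPt Q E (n + 1) ≤ aPt Q E m := aPt_mono hN hQ hE (by omega) hm2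
    exact absurd (this.trans htm.1) (not_le.mpr ht.2)

lemma pathEnc_neg (hN : 1 ≤ N)
    (hQ : ∀ n, 1 ≤ n → n ≤ N → 0 < Q n)
    (hE : ∀ n, 1 ≤ n → n ≤ N - 1 → 0 < E n)
    {y : ℝ} (hy : y ≤ 0) : pathEnc N Q E y = y := by
  have h := rise N Q E y 0 hy ?_
  · have h0 : pathEnc N Q E 0 = 0 := by unfold pathEnc; simp
    rw [h0] at h; linarith
  · intro t ht htB
    simp only [ballSet, Set.mem_iUnion, Finset.mem_Icc] at htB
    obtain ⟨m, ⟨hm1, hm2⟩, htm⟩ := htB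
    have : (0:ℝ) ≤ aPt Q E m := aPt_nonneg hN hQ hE hm2
    have := htm.1
    have := ht.2
    linarith

lemma pathEnc_le (hN : 1 ≤ N)
    (hQ : ∀ n, 1 ≤ n → n ≤ N → 0 < Q n)
    (hE : ∀ n, 1 ≤ n → n ≤ N - 1 → 0 < E n)
    (y : ℝ) : pathEnc N Q E y ≤ max y 0 := by
  rcases le_total y 0 with hy | hy
  · rw [pathEnc_neg hN hQ hE hy]; exact le_max_left _ _
  · have : pathEnc N Q E y ≤ ∫ t in (0:ℝ)..y, (1:ℝ) := by
      unfold pathEnc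
      apply intervalIntegral.integral_mono_on hy (slopeF_intInt N Q E 0 y)
        intervalIntegrable_const
      intro t _
      exact slopeF_le_one N Q E t
    simp at this
    exact le_trans this (le_max_left _ _)

lemma bddAbove_image (hN : 1 ≤ N)
    (hQ : ∀ n, 1 ≤ n → n ≤ N → 0 < Q n)
    (hE : ∀ n, 1 ≤ n → n ≤ N - 1 → 0 < E n)
    (x : ℝ) : BddAbove (pathEnc N Q E '' Iic x) := by
  refine ⟨max x 0, ?_⟩
  rintro _ ⟨y, hy, rfl⟩
  exact le_trans (pathEnc_le hN hQ hE y) (max_le_max hy le_rfl)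

end Main

theorem max_increment_eq (N : ℕ) (hN : 1 ≤ N) (Q E : ℕ → ℝ)
    (hQ : ∀ n, 1 ≤ n → n ≤ N → 0 < Q n)
    (hE : ∀ n, 1 ≤ n → n ≤ N - 1 → 0 < E n) :
    ∀ n, 1 ≤ n → n ≤ N - 1 →
      pastMax (pathEnc N Q E) (bPt Q E (n + 1)) - pastMax (pathEnc N Q E) (bPt Q E n) =
        aPt Q E (n + 1) -
          min (bPt Q E n + pastMax (pathEnc N Q E) (bPt Q E n) - pathEnc N Q E (bPt Q E n))
            (aPt Q E (n + 1)) := by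
  intro n hn1 hn2
  have hn1N : n + 1 ≤ N := by omega
  set S := pathEnc N Q E with hS
  set b := bPt Q E n with hb
  set a := aPt Q E (n + 1) with ha
  set b' := bPt Q E (n + 1) with hb'
  -- basic ordering
  have hEn : 0 < E n := hE n hn1 hn2
  have hQn1 : 0 < Q (n + 1) := hQ (n + 1) (by omega) hn1N
  have haseq : a = b + E n := aPt_succ n hn1
  have hba : b ≤ a := by rw [haseq]; linarith
  have hab' : a ≤ b' := by rw [hb', bPt]; linarith
  have hbb' : b ≤ b' := hba.trans hab'
  -- S on [b, a]
  have hriseOn : ∀ y ∈ Icc b a, S y = S b + (y - b) := by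
    intro y hy
    apply rise N Q E b y hy.1
    intro t ht
    exact gap_empty hN hQ hE hn1 hn1N t ⟨ht.1, lt_of_lt_of_le ht.2 hy.2⟩
  -- S on [a, b']
  have hfallOn : ∀ y ∈ Icc a b', S y = S a - (y - a) := by
    intro y hy
    apply fall N Q E a y hy.1
    intro t ht
    simp only [ballSet, Set.mem_iUnion, Finset.mem_Icc]
    exact ⟨n + 1, ⟨by omega, hn1N⟩, ⟨ht.1, ht.2.trans hy.2⟩⟩
  have hSa : S a = S b + E n := by
    have := hriseOn a ⟨hba, le_rfl⟩
    rw [this, haseq]; ring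
  -- sup manipulation
  have hbddb := bddAbove_image hN hQ hE b
  have hbddb' := bddAbove_image hN hQ hE b'
  have hSbM : S b ≤ pastMax S b := le_csSup hbddb ⟨b, Set.self_mem_Iic, rfl⟩
  have hsplit : pastMax S b' = max (pastMax S b) (S a) := by
    have hdecomp : Iic b' = Iic b ∪ Icc b b' := (Set.Iic_union_Icc_eq_Iic hbb').symm
    have hsup2 : sSup (S '' Icc b b') = S a := by
      apply IsGreatest.csSup_eq
      constructor
      · exact ⟨a, ⟨hba, hab'⟩, rfl⟩
      · rintro _ ⟨y, hy, rfl⟩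
        rcases le_total y a with hya | hya
        · rw [hriseOn y ⟨hy.1, hya⟩, hSa]; linarith
        · rw [hfallOn y ⟨hya, hy.2⟩]; linarith
    rw [pastMax, hdecomp, Set.image_union,
      csSup_union hbddb ⟨S b, ⟨b, Set.self_mem_Iic, rfl⟩⟩
        (hbddb'.mono (Set.image_mono (Set.Icc_subset_Iic_self)))
        ⟨S b, ⟨b, ⟨le_rfl, hbb'⟩, rfl⟩⟩,
      hsup2]
    rfl
  rw [hsplit]
  rcases le_total (S a) (pastMax S b) with hcase | hcase
  · rw [max_eq_left hcase, min_eq_right (by linarith)]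
    ring
  · rw [max_eq_right hcase, min_eq_left (by linarith)]
    linarith
end

section
/- Let S : ℝ → ℝ be continuous with local maxima at a_1 < … < a_N and local minima at b_1 < … < b_N, strictly monotone between extrema, S(0) = 0, M(x) = sup_{y≤x} S(y) finite, and define Q_n(S), E_n(S) as amplitudes and Q_n(TS) = min{M(a_n) − S(b_n), E_n(S)}. Then for all 1 ≤ n ≤ N: M(a_n) − S(b_n) = Σ_{k=1}^n Q_k(S) − Σ_{k=1}^{n−1} Q_k(TS); consequently Q_n(TS) = min{ Σ_{k=1}^n Q_k(S) − Σ_{k=1}^{n−1} Q_k(TS), E_n(S) }, i.e., the Pitman transform realizes the ultra-discrete Toda lattice equation for general continuous path encodings. -/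
lemma le_pastMax (S : ℝ → ℝ) (hB : ∀ x : ℝ, BddAbove (S '' Set.Iic x))
    {x y : ℝ} (h : y ≤ x) : S y ≤ pastMax S x :=
  le_csSup (hB x) ⟨y, h, rfl⟩

lemma pastMax_le (S : ℝ → ℝ) {x c : ℝ} (h : ∀ y ≤ x, S y ≤ c) : pastMax S x ≤ c :=
  csSup_le ⟨S x, x, Set.mem_Iic.mpr le_rfl, rfl⟩ (by rintro _ ⟨y, hy, rfl⟩; exact h y hy)

lemma pastMax_mono (S : ℝ → ℝ) (hB : ∀ x : ℝ, BddAbove (S '' Set.Iic x))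
    {x y : ℝ} (h : x ≤ y) : pastMax S x ≤ pastMax S y :=
  csSup_le_csSup (hB y) ⟨S x, x, Set.mem_Iic.mpr le_rfl, rfl⟩
    (Set.image_mono (Set.Iic_subset_Iic.mpr h))

theorem pitman_realizes_toda (S : ℝ → ℝ) (hS : Continuous S) (h0 : S 0 = 0)
    (hB : ∀ x : ℝ, BddAbove (S '' Set.Iic x))
    (N : ℕ) (hN : 1 ≤ N) (a b : ℕ → ℝ)
    (horder : ∀ n, 1 ≤ n → n ≤ N → a n < b n ∧ (n ≤ N - 1 → b n < a (n + 1)))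
    (hinc₀ : StrictMonoOn S (Set.Iic (a 1)))
    (hdec : ∀ n, 1 ≤ n → n ≤ N → StrictAntiOn S (Set.Icc (a n) (b n)))
    (hinc : ∀ n, 1 ≤ n → n ≤ N - 1 → StrictMonoOn S (Set.Icc (b n) (a (n + 1))))
    (hincN : StrictMonoOn S (Set.Ici (b N)))
    (QT : ℕ → ℝ)
    (hQT : ∀ k, 1 ≤ k → k ≤ N - 1 →
      QT k = min (pastMax S (a k) - S (b k)) (S (a (k + 1)) - S (b k)))
    (hQTN : QT N = pastMax S (a N) - S (b N)) :
    ∀ n, 1 ≤ n → n ≤ N →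
      (pastMax S (a n) - S (b n) =
        (∑ k ∈ Finset.Icc 1 n, (S (a k) - S (b k))) - ∑ k ∈ Finset.Icc 1 (n - 1), QT k) ∧
      (n ≤ N - 1 → QT n =
        min ((∑ k ∈ Finset.Icc 1 n, (S (a k) - S (b k))) - ∑ k ∈ Finset.Icc 1 (n - 1), QT k)
          (S (a (n + 1)) - S (b n))) ∧
      (n = N → QT N =
        (∑ k ∈ Finset.Icc 1 N, (S (a k) - S (b k))) - ∑ k ∈ Finset.Icc 1 (N - 1), QT k) := by
  -- the past maximum at a 1 equals S (a 1)
  have hM1 : pastMax S (a 1) = S (a 1) := by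
    refine le_antisymm (pastMax_le S ?_) (le_pastMax S hB le_rfl)
    intro y hy
    exact hinc₀.monotoneOn hy (Set.mem_Iic.mpr le_rfl) hy
  -- recursion for the past maximum
  have hstep : ∀ n, 1 ≤ n → n + 1 ≤ N →
      pastMax S (a (n + 1)) = max (S (a (n + 1))) (pastMax S (a n)) := by
    intro n h1 h2
    have hn1 : n ≤ N - 1 := by omega
    obtain ⟨hab, hba⟩ := horder n h1 (by omega)
    have hba' := hba hn1
    apply le_antisymm
    · apply pastMax_le
      intro y hy
      rcases le_or_gt y (a n) with h | h
      · exact le_trans (le_pastMax S hB h) (le_max_right _ _)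
      · rcases le_or_gt y (b n) with h' | h'
        · have hy1 : S y ≤ S (a n) :=
            (hdec n h1 (by omega)).antitoneOn ⟨le_rfl, hab.le⟩ ⟨h.le, h'⟩ h.le
          exact le_trans (hy1.trans (le_pastMax S hB le_rfl)) (le_max_right _ _)
        · have hy1 : S y ≤ S (a (n + 1)) :=
            (hinc n h1 hn1).monotoneOn ⟨h'.le, hy⟩ ⟨hba'.le, le_rfl⟩ hy
          exact le_trans hy1 (le_max_left _ _)
    · apply max_le (le_pastMax S hB le_rfl)
      exact pastMax_mono S hB (by linarith)
  -- the main identity, by induction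
  have key : ∀ n, 1 ≤ n → n ≤ N →
      pastMax S (a n) - S (b n) =
        (∑ k ∈ Finset.Icc 1 n, (S (a k) - S (b k))) - ∑ k ∈ Finset.Icc 1 (n - 1), QT k := by
    intro n
    induction n with
    | zero => omega
    | succ m ih =>
      intro h1 h2
      rcases Nat.eq_zero_or_pos m with hm0 | hm
      · subst hm0
        simp [hM1]
      · have ihm := ih hm (by omega)
        have hQTm := hQT m hm (by omega)
        have hmm : max (S (a (m + 1))) (pastMax S (a m)) +
            min (S (a (m + 1))) (pastMax S (a m)) = S (a (m + 1)) + pastMax S (a m) :=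
          max_add_min _ _
        have hQTm' : QT m = min (S (a (m + 1))) (pastMax S (a m)) - S (b m) := by
          rw [hQTm, min_comm, min_sub_sub_right]
        have hsumQ : ∑ k ∈ Finset.Icc 1 (m + 1), (S (a k) - S (b k)) =
            (∑ k ∈ Finset.Icc 1 m, (S (a k) - S (b k))) + (S (a (m + 1)) - S (b (m + 1))) :=
          Finset.sum_Icc_succ_top (by omega) _
        have hsumT : ∑ k ∈ Finset.Icc 1 m, QT k =
            (∑ k ∈ Finset.Icc 1 (m - 1), QT k) + QT m := by
          conv_lhs => rw [show m = (m - 1) + 1 by omega]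
          rw [Finset.sum_Icc_succ_top (by omega), show m - 1 + 1 = m by omega]
        rw [hstep m hm h2, hsumQ, show m + 1 - 1 = m by omega, hsumT]
        linarith
  intro n h1 h2
  refine ⟨key n h1 h2, fun hn => ?_, fun hn => ?_⟩
  · rw [hQT n h1 hn, key n h1 h2]
  · rw [hQTN]; exact key N hN le_rfl
end
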